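/- Let g be a Lie algebra with an S₄-action as automorphisms, extending the A₄-action (with generators τ₁, τ₂, φ and additionally τ = (12) satisfying τ² = id, τ₁τ = ττ₁, τ₂τ = ττ₂τ₁, τφ = φ²τ). Then τ preserves the eigenspace g₀, and the linear map x ↦ x̄ on A = g₀ defined by τ(ι₀(x)) = −ι₀(x̄) is an involution of the coordinate algebra (A,*): it is involutive (x̄̄ = x) and satisfies (x*y)‾ = ȳ * x̄ for all x,y ∈ A. -/

import Mathlib

/-- The embedding `ιᵢ = φ^i ∘ ι₀` of the coordinate space `A = g₀` into `g`. -/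
def iota {F : Type*} [Field F] {g : Type*} [LieRing g] [LieAlgebra F g]
    (φ : g →ₗ⁅F⁆ g) (A : Submodule F g) (i : ZMod 3) (x : A) : g :=
  (fun z => φ z)^[i.val] (x : g)

/-- For a Lie algebra with `S₄`-action extending the `A₄`-action, the extra
transposition `τ = (12)` preserves `g₀`, and the map `x ↦ x̄` on `A = g₀`
defined by `τ(ι₀(x)) = −ι₀(x̄)` is an involution of `(A,*)`:
`x̄̄ = x` and `(x*y)‾ = ȳ*x̄`. -/
theorem stmt13 (F : Type*) [Field F] (hchar : (2 : F) ≠ 0)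
    (g : Type*) [LieRing g] [LieAlgebra F g]
    (τ₁ τ₂ φ τ : g →ₗ⁅F⁆ g)
    (hτ₁ : ∀ x, τ₁ (τ₁ x) = x) (hτ₂ : ∀ x, τ₂ (τ₂ x) = x) (hτ : ∀ x, τ (τ x) = x)
    (hcomm : ∀ x, τ₁ (τ₂ x) = τ₂ (τ₁ x))
    (hφ3 : ∀ x, φ (φ (φ x)) = x)
    (hrel1 : ∀ x, φ (τ₁ x) = τ₂ (φ x))
    (hrel2 : ∀ x, φ (τ₂ x) = τ₁ (τ₂ (φ x)))
    (hrel3 : ∀ x, τ₁ (τ x) = τ (τ₁ x))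
    (hrel4 : ∀ x, τ₂ (τ x) = τ (τ₂ (τ₁ x)))
    (hrel5 : ∀ x, τ (φ x) = φ (φ (τ x)))
    (A : Submodule F g)
    (hA : A = Module.End.eigenspace (τ₁ : g →ₗ[F] g) 1 ⊓
              Module.End.eigenspace (τ₂ : g →ₗ[F] g) (-1))
    (mul : A →ₗ[F] A →ₗ[F] A)
    (hmul : ∀ x y : A, ⁅iota φ A 1 x, iota φ A 2 y⁆ = iota φ A 0 (mul x y))
    (bar : A → A)
    (hbar : ∀ x : A, τ (x : g) = -((bar x : A) : g)) :
    (∀ v ∈ A, τ v ∈ A) ∧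
    (∀ x : A, bar (bar x) = x) ∧
    (∀ x y : A, bar (mul x y) = mul (bar y) (bar x)) := by
  have hA0 : ∀ x : A, iota φ A 0 x = (x : g) := fun x => rfl
  have hA1 : ∀ x : A, iota φ A 1 x = φ (x : g) := fun x => rfl
  have hA2 : ∀ x : A, iota φ A 2 x = φ (φ (x : g)) := fun x => rfl
  refine ⟨?_, ?_, ?_⟩
  · intro v hv
    rw [hA] at hv ⊢
    rw [Submodule.mem_inf, Module.End.mem_eigenspace_iff, Module.End.mem_eigenspace_iff] at hv ⊢
    obtain ⟨h1, h2⟩ := hv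
    simp only [one_smul, neg_smul] at h1 h2 ⊢
    have h1' : τ₁ v = v := h1
    have h2' : τ₂ v = -v := h2
    constructor
    · show τ₁ (τ v) = τ v
      rw [hrel3, h1']
    · show τ₂ (τ v) = -τ v
      rw [hrel4, h1', h2', map_neg]
  · intro x
    have h := hτ (x : g)
    rw [hbar x, map_neg, hbar (bar x), neg_neg] at h
    exact Subtype.ext h
  · intro x y
    have h1 : τ (iota φ A 1 x) = -(iota φ A 2 (bar x)) := by
      rw [hA1, hA2, hrel5, hbar, map_neg, map_neg]
    have h2 : τ (iota φ A 2 y) = -(iota φ A 1 (bar y)) := by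
      rw [hA2, hA1, hrel5, hrel5, hφ3, hbar, map_neg]
    have key := congrArg τ (hmul x y)
    rw [LieHom.map_lie, h1, h2, hA0, hbar, neg_lie, lie_neg, neg_neg,
      ← lie_skew, hmul, hA0] at key
    exact Subtype.ext (neg_injective key).symm
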